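/- For every integer k ≥ 2, set e = −(4k+2), a = −k(2k+1)/(k+2) and b = 4k(k+1)⁴(2k+1)/((k+2)²(k−1)²), and let C_k be the Weierstrass curve over ℚ with equation y² + e·x·y + b·y = x³ + a·x² (Weierstrass coefficients a₁ = e, a₂ = a, a₃ = b, a₄ = 0, a₆ = 0). Then the discriminant of C_k is nonzero; in particular C_k is a smooth elliptic curve over ℚ. -/

import Mathlib

/-- The "heptagonal" Weierstrass curve `y² + e·x·y + b·y = x³ + a·x²` over `ℚ`, where
`e = -(4k+2)`, `a = -k(2k+1)/(k+2)` and `b = 4k(k+1)⁴(2k+1)/((k+2)²(k-1)²)`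
(proof of Theorem 6.11 of the paper). -/
def heptagonCurve (k : ℤ) : WeierstrassCurve ℚ :=
  { a₁ := -(4 * (k : ℚ) + 2)
    a₂ := -(k : ℚ) * (2 * (k : ℚ) + 1) / ((k : ℚ) + 2)
    a₃ := 4 * (k : ℚ) * ((k : ℚ) + 1) ^ 4 * (2 * (k : ℚ) + 1) /
      (((k : ℚ) + 2) ^ 2 * ((k : ℚ) - 1) ^ 2)
    a₄ := 0
    a₆ := 0 }

/-- For every integer `k ≥ 2` the discriminant of the heptagonal curve is nonzero;
in particular it is a smooth elliptic curve over `ℚ`. -/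
theorem heptagonCurve_discriminant_ne_zero (k : ℤ) (hk : 2 ≤ k) :
    (heptagonCurve k).Δ ≠ 0 := by
  have hq : (2 : ℚ) ≤ (k : ℚ) := by exact_mod_cast hk
  set q : ℚ := (k : ℚ) with hqdef
  have h1 : q - 1 ≠ 0 := by nlinarith
  have h2 : q + 2 ≠ 0 := by nlinarith
  have h0 : q ≠ 0 := by nlinarith
  have h3 : q + 1 ≠ 0 := by nlinarith
  have h4 : 2 * q + 1 ≠ 0 := by nlinarith
  have key : (heptagonCurve k).Δ =
      -6912 * q ^ 4 * (q + 1) ^ 16 * (2 * q + 1) ^ 4 / ((q + 2) ^ 8 * (q - 1) ^ 8) := by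
    simp only [heptagonCurve, WeierstrassCurve.Δ, WeierstrassCurve.b₂, WeierstrassCurve.b₄,
      WeierstrassCurve.b₆, WeierstrassCurve.b₈]
    rw [← hqdef]
    field_simp
    ring
  rw [key]
  apply div_ne_zero
  · positivity
  · positivity
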